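/- Let ω ∈ (0,1) and let z ∈ ℂ satisfy |z − 1| = 1. Then 2 − ωz ≠ 0 and ω/(2−ω) ≤ |2/(2 − ωz) − 2/(2 − ω)| ≤ ω/((2−ω)(1−ω)); that is, 2/(2 − ωz) lies in the closed annulus centered at 2/(2−ω) with inner radius ω/(2−ω) and outer radius ω/((2−ω)(1−ω)). -/

import Mathlib

theorem stmt12 (ω : ℝ) (hω : ω ∈ Set.Ioo (0 : ℝ) 1) (z : ℂ)
    (hz : ‖z - 1‖ = 1) :
    (2 - (ω : ℂ) * z ≠ 0) ∧
    ω / (2 - ω) ≤ ‖2 / (2 - (ω : ℂ) * z) - 2 / (2 - (ω : ℂ))‖ ∧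
    ‖2 / (2 - (ω : ℂ) * z) - 2 / (2 - (ω : ℂ))‖ ≤ ω / ((2 - ω) * (1 - ω)) := by
  obtain ⟨hω0, hω1⟩ := hω
  have h2ω : (0:ℝ) < 2 - ω := by linarith
  have hA : ‖(2 - (ω:ℂ)*z) - (2 - (ω:ℂ))‖ = ω := by
    have : (2 - (ω:ℂ)*z) - (2 - (ω:ℂ)) = -((ω:ℂ) * (z - 1)) := by ring
    rw [this, norm_neg, norm_mul, hz, Complex.norm_real, Real.norm_eq_abs, abs_of_pos hω0, mul_one]
  have habsω : ‖2 - (ω:ℂ)‖ = 2 - ω := by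
    have : (2 - (ω:ℂ)) = ((2 - ω : ℝ) : ℂ) := by push_cast; ring
    rw [this, Complex.norm_real, Real.norm_eq_abs, abs_of_pos h2ω]
  have hlo : 2 - 2*ω ≤ ‖2 - (ω:ℂ)*z‖ := by
    have h2 : (2 - (ω:ℂ)) = (2 - (ω:ℂ)*z) + ((2 - (ω:ℂ)) - (2 - (ω:ℂ)*z)) := by ring
    have h3 : ‖(2 - (ω:ℂ)) - (2 - (ω:ℂ)*z)‖ = ω := by
      have h4 : (2 - (ω:ℂ)) - (2 - (ω:ℂ)*z) = -((2 - (ω:ℂ)*z) - (2 - (ω:ℂ))) := by ring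
      rw [h4, norm_neg, hA]
    have := norm_add_le (2 - (ω:ℂ)*z) ((2 - (ω:ℂ)) - (2 - (ω:ℂ)*z))
    rw [← h2, habsω, h3] at this
    linarith
  have hhi : ‖2 - (ω:ℂ)*z‖ ≤ 2 := by
    have h2 : (2 - (ω:ℂ)*z) = ((2 - (ω:ℂ)*z) - (2 - (ω:ℂ))) + (2 - (ω:ℂ)) := by ring
    calc ‖2 - (ω:ℂ)*z‖
        ≤ ‖(2 - (ω:ℂ)*z) - (2 - (ω:ℂ))‖ + ‖2 - (ω:ℂ)‖ := by
          nth_rewrite 1 [h2]; exact norm_add_le _ _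
      _ = 2 := by rw [hA, habsω]; linarith
  have hupos : 0 < ‖2 - (ω:ℂ)*z‖ := by linarith
  have hne : (2 - (ω:ℂ)*z) ≠ 0 := by
    intro h; rw [h, norm_zero] at hupos; linarith
  have hne2 : (2 - (ω:ℂ)) ≠ 0 := by
    intro h; rw [h, norm_zero] at habsω; linarith
  have hdiff : 2 / (2 - (ω:ℂ)*z) - 2 / (2 - (ω:ℂ))
      = 2 * (ω:ℂ) * (z - 1) / ((2 - (ω:ℂ)*z) * (2 - (ω:ℂ))) := by
    field_simp
    ring
  have habsd : ‖2 / (2 - (ω:ℂ)*z) - 2 / (2 - (ω:ℂ))‖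
      = 2 * ω / (‖2 - (ω:ℂ)*z‖ * (2 - ω)) := by
    rw [hdiff, norm_div, norm_mul, norm_mul, norm_mul, hz, habsω, Complex.norm_real, Real.norm_eq_abs,
      abs_of_pos hω0, Complex.norm_two, mul_one]
  refine ⟨hne, ?_, ?_⟩
  · rw [habsd, div_le_div_iff₀ h2ω (by positivity)]
    nlinarith [mul_nonneg (mul_nonneg hω0.le h2ω.le)
      (by linarith : (0:ℝ) ≤ 2 - ‖2 - (ω:ℂ)*z‖)]
  · rw [habsd, div_le_div_iff₀ (by positivity) (by nlinarith : (0:ℝ) < (2 - ω) * (1 - ω))]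
    nlinarith [mul_nonneg (mul_nonneg hω0.le h2ω.le)
      (by linarith : (0:ℝ) ≤ ‖2 - (ω:ℂ)*z‖ - (2 - 2*ω))]
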